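/- arXiv:2110.12128 — 2 statements merged into one kernel-verified Lean document; each statement's English description precedes it below -/
import Mathlib

section
/- Let S be a left cancellative monoid and R a ring with S-grading of support size d. For any integer r > 1 and any homogeneous elements a_1, …, a_{rd} of R, either a_1 a_2 ⋯ a_{rd} = 0, or there exist indices 0 ≤ s_0 < s_1 < ⋯ < s_r ≤ rd such that each partial product a_{s_{i-1}+1} ⋯ a_{s_i} (for i = 1, …, r) has homogeneous degree equal to the neutral element e. -/
/-- Product `a * l₀ * l₁ * ⋯` of a nonempty list of ring elements. -/
def mulList {R : Type*} [Mul R] (a : R) (l : List R) : R := l.foldl (· * ·) a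

/-- `pw a n` is `aⁿ` for `n ≥ 1` (junk value `0` at `n = 0`). -/
def pw {R : Type*} [Mul R] [Zero R] (a : R) : ℕ → R
  | 0 => 0
  | 1 => a
  | n + 2 => pw a (n + 1) * a

/-- Product of `n` elements given by `f` (junk `0` when `n = 0`). -/
def finProd {R : Type*} [Mul R] [Zero R] : {n : ℕ} → (Fin n → R) → R
  | 0, _ => 0
  | n + 1, f => mulList (f 0) (List.ofFn fun i : Fin n => f i.succ)

/-- `R ^ n = 0`: every product of `n` elements of `R` vanishes. -/
def PowZero (R : Type*) [Mul R] [Zero R] (n : ℕ) : Prop :=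
  ∀ (a : R) (l : List R), l.length + 1 = n → mulList a l = 0

/-- `T ^ n = 0` for a subset `T` of a ring. -/
def PowZeroOn {R : Type*} [Mul R] [Zero R] (T : Set R) (n : ℕ) : Prop :=
  ∀ (a : R) (l : List R), a ∈ T → (∀ x ∈ l, x ∈ T) → l.length + 1 = n → mulList a l = 0

/-- `a` is nilpotent: `aⁿ = 0` for some `n ≥ 1`. -/
def IsNilE {R : Type*} [Mul R] [Zero R] (a : R) : Prop := ∃ n, 1 ≤ n ∧ pw a n = 0

/-- A nil ring: every element is nilpotent. -/
def IsNilRing (R : Type*) [Mul R] [Zero R] : Prop := ∀ a : R, IsNilE a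

/-- An `S`-grading of the ring `R`: a direct sum decomposition into additive
subgroups with `R_g R_h ⊆ R_{gh}`. -/
structure IsGrading {S R : Type*} [Monoid S] [NonUnitalRing R] [DecidableEq S]
    (A : S → AddSubgroup R) : Prop where
  mul_mem : ∀ {g h : S} {x y : R}, x ∈ A g → y ∈ A h → x * y ∈ A (g * h)
  isInternal : DirectSum.IsInternal A

/-- Grading by an additively written monoid. -/
structure IsAddGrading {S R : Type*} [AddMonoid S] [NonUnitalRing R] [DecidableEq S]
    (A : S → AddSubgroup R) : Prop where
  mul_mem : ∀ {g h : S} {x y : R}, x ∈ A g → y ∈ A h → x * y ∈ A (g + h)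
  isInternal : DirectSum.IsInternal A

/-- The subset `T` of a ring is `f`-commutative: there are a semigroup `G` acting on it
from the left and a map `f` with `a*b = f(a,b)·(b*a)`. -/
def IsFCommutativeOn {R : Type*} [Mul R] (T : Set R) : Prop :=
  ∃ (G : Type) (_ : Semigroup G) (act : G → R → R),
    (∀ l m : G, ∀ x : R, x ∈ T → act (l * m) x = act l (act m x)) ∧
    (∀ l : G, ∀ x : R, x ∈ T → act l x ∈ T) ∧
    (∀ l : G, ∀ x y : R, x ∈ T → y ∈ T → act l (x * y) = act l x * y) ∧
    ∃ f : R → R → G, ∀ a b : R, a ∈ T → b ∈ T → a * b = act (f a b) (b * a)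

/-- The ring `R` is `f`-commutative. -/
def IsFCommutative (R : Type*) [Mul R] : Prop :=
  ∃ (G : Type) (_ : Semigroup G) (act : G → R → R),
    (∀ l m : G, ∀ x : R, act (l * m) x = act l (act m x)) ∧
    (∀ l : G, ∀ x y : R, act l (x * y) = act l x * y) ∧
    ∃ f : R → R → G, ∀ a b : R, a * b = act (f a b) (b * a)

/-- The order of `g`: least `n ≥ 1` with `gⁿ = 1`, and `0` if no such `n` exists. -/
noncomputable def ordOf {S : Type*} [Monoid S] (g : S) : ℕ := sInf {n | 1 ≤ n ∧ g ^ n = 1}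

section auxLemmas

variable {R : Type*} [NonUnitalRing R]

/-- Product of a list (junk `0` on the empty list). -/
def prodl {R : Type*} [Mul R] [Zero R] : List R → R
  | [] => 0
  | x :: xs => mulList x xs

lemma mulList_cons (b x : R) (l : List R) : mulList b (x :: l) = mulList (b * x) l := rfl

lemma mulList_append (b : R) (l1 l2 : List R) :
    mulList b (l1 ++ l2) = mulList (mulList b l1) l2 := by
  simp [mulList, List.foldl_append]

lemma mul_mulList (a b : R) (l : List R) : a * mulList b l = mulList (a * b) l := by
  induction l generalizing b with
  | nil => rfl
  | cons x xs ih => rw [mulList_cons, mulList_cons, ih, mul_assoc]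

lemma mulList_zero' (l : List R) : mulList (0 : R) l = 0 := by
  induction l with
  | nil => rfl
  | cons x xs ih => rw [mulList_cons, zero_mul]; exact ih

lemma prodl_of_seg_zero (l1 seg l2 : List R) (hne : seg ≠ []) (h : prodl seg = 0) :
    prodl (l1 ++ (seg ++ l2)) = 0 := by
  cases seg with
  | nil => exact absurd rfl hne
  | cons x xs =>
    cases l1 with
    | nil =>
      show mulList x (xs ++ l2) = 0
      rw [mulList_append, show mulList x xs = 0 from h, mulList_zero']
    | cons c T =>
      show mulList c (T ++ (x :: xs ++ l2)) = 0
      rw [show (x :: xs ++ l2 : List R) = (x :: xs) ++ l2 from rfl, mulList_append,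
        mulList_append, mulList_cons, ← mul_mulList, show mulList x xs = 0 from h,
        mul_zero, mulList_zero']

variable {S : Type*} [Monoid S]

lemma mulList_mem {A : S → AddSubgroup R}
    (hmul : ∀ {g h : S} {x y : R}, x ∈ A g → y ∈ A h → x * y ∈ A (g * h))
    {l : List R} {m : List S} (hf : List.Forall₂ (fun x s => x ∈ A s) l m)
    {b : R} {t : S} (hb : b ∈ A t) : mulList b l ∈ A (t * m.prod) := by
  induction hf generalizing b t with
  | nil => simpa [mulList] using hb
  | @cons x s l' m' hx _ ih =>
    rw [List.prod_cons, ← mul_assoc]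
    exact ih (hmul hb hx)

lemma prodl_mem {A : S → AddSubgroup R}
    (hmul : ∀ {g h : S} {x y : R}, x ∈ A g → y ∈ A h → x * y ∈ A (g * h))
    {l : List R} {m : List S} (hf : List.Forall₂ (fun x s => x ∈ A s) l m)
    (hne : l ≠ []) : prodl l ∈ A m.prod := by
  cases hf with
  | nil => exact absurd rfl hne
  | @cons x s l' m' hx hf' =>
    rw [List.prod_cons]
    exact mulList_mem hmul hf' hx

lemma forall₂_ofFn {α β : Type*} (P : α → β → Prop) :
    ∀ {n : ℕ} (f : Fin n → α) (g : Fin n → β), (∀ i, P (f i) (g i)) →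
      List.Forall₂ P (List.ofFn f) (List.ofFn g)
  | 0, f, g, _ => by simp
  | n + 1, f, g, h => by
    rw [List.ofFn_succ, List.ofFn_succ]
    exact List.Forall₂.cons (h 0) (forall₂_ofFn P _ _ fun i => h i.succ)

lemma finProd_eq_zero_of {R : Type*} [Mul R] [Zero R] :
    ∀ {n : ℕ} (f : Fin n → R), n = 0 → finProd f = 0
  | 0, _, _ => rfl
  | n + 1, _, h => by omega

lemma finProd_eq_prodl {R : Type*} [Mul R] [Zero R] :
    ∀ {n : ℕ} (f : Fin n → R), n ≠ 0 → finProd f = prodl (List.ofFn f)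
  | 0, _, h => absurd rfl h
  | n + 1, f, _ => by rw [List.ofFn_succ]; rfl

end auxLemmas

theorem stmt_4 {S R : Type*} [Monoid S] [IsLeftCancelMul S] [DecidableEq S]
    [NonUnitalRing R] (A : S → AddSubgroup R) (hA : IsGrading A)
    (d r : ℕ) (hfin : {g : S | A g ≠ ⊥}.Finite) (hcard : hfin.toFinset.card = d)
    (hr : 1 < r)
    (a : Fin (r * d) → R) (g : Fin (r * d) → S) (ha : ∀ i, a i ∈ A (g i)) :
    finProd a = 0 ∨
      ∃ st : Fin (r + 1) → ℕ, StrictMono st ∧ st (Fin.last r) ≤ r * d ∧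
        ∀ i : Fin r,
          (((List.ofFn g).drop (st i.castSucc)).take (st i.succ - st i.castSucc)).prod
            = 1 := by
  by_cases hp : finProd a = 0
  · exact Or.inl hp
  right
  have hd : 0 < d := by
    rcases Nat.eq_zero_or_pos d with h0 | h
    · exact absurd (finProd_eq_zero_of a (by rw [h0, Nat.mul_zero])) hp
    · exact h
  have hn1 : 1 ≤ r * d := Nat.mul_pos (by omega) hd
  have hnd : d < r * d := by
    calc d = 1 * d := (Nat.one_mul d).symm
    _ < r * d := Nat.mul_lt_mul_of_lt_of_le hr (le_refl d) hd
  set L := List.ofFn a with hL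
  set G := List.ofFn g with hG
  have hLG : List.Forall₂ (fun x s => x ∈ A s) L G := forall₂_ofFn _ a g ha
  have hGlen : G.length = r * d := List.length_ofFn
  have hLlen : L.length = r * d := List.length_ofFn
  have hpl : prodl L ≠ 0 := by
    rw [← finProd_eq_prodl a (by omega)]; exact hp
  -- key interval facts
  have key : ∀ i j : ℕ, i < j → j ≤ r * d →
      ((G.drop i).take (j - i)).prod ∈ hfin.toFinset ∧
      (G.take j).prod = (G.take i).prod * ((G.drop i).take (j - i)).prod := by
    intro i j hij hjn
    constructor
    · set seg := (L.drop i).take (j - i) with hseg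
      have hsegne : seg ≠ [] := by
        have hlen : seg.length = min (j - i) (L.length - i) := by
          simp [hseg]
        rw [hLlen] at hlen
        intro h
        rw [h] at hlen
        simp only [List.length_nil] at hlen
        omega
      have hdecomp : L = L.take i ++ (seg ++ L.drop j) := by
        have h1 : (L.drop i).drop (j - i) = L.drop j := by
          rw [List.drop_drop]
          congr 1
          omega
        rw [hseg, ← h1, List.take_append_drop, List.take_append_drop]
      have hsegnz : prodl seg ≠ 0 := fun h =>
        hpl (by rw [hdecomp]; exact prodl_of_seg_zero _ _ _ hsegne h)
      have hsegmem : prodl seg ∈ A (((G.drop i).take (j - i)).prod) :=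
        prodl_mem hA.mul_mem
          (List.forall₂_take (j - i) (List.forall₂_drop i hLG)) hsegne
      rw [Set.Finite.mem_toFinset]
      intro hbot
      rw [hbot] at hsegmem
      exact hsegnz (by simpa using hsegmem)
    · have hji : i + (j - i) = j := by omega
      have h2 : (G.take (i + (j - i))).prod
          = (G.take i).prod * ((G.drop i).take (j - i)).prod := by
        rw [List.take_add, List.prod_append]
      rw [hji] at h2
      exact h2
  have hmem : ∀ k : ℕ, 1 ≤ k → k ≤ r * d → (G.take k).prod ∈ hfin.toFinset := by
    intro k h1 h2
    have := (key 0 k h1 h2).1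
    simpa using this
  have hone : (1 : S) ∈ hfin.toFinset := by
    have hpig := Finset.exists_ne_map_eq_of_card_lt_of_maps_to
      (s := Finset.Icc 1 (r * d)) (t := hfin.toFinset) (f := fun k => (G.take k).prod)
      (by rw [Nat.card_Icc, hcard]; omega)
      (fun k hk => by
        rw [Finset.mem_coe, Finset.mem_Icc] at hk
        exact hmem k hk.1 hk.2)
    obtain ⟨i, hi, j, hj, hij, heq⟩ := hpig
    rw [Finset.mem_Icc] at hi hj
    rcases lt_or_gt_of_ne hij with hlt | hlt
    · obtain ⟨hsupp, hprod⟩ := key i j hlt hj.2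
      have h1 : ((G.drop i).take (j - i)).prod = 1 := by
        apply mul_left_cancel (a := (G.take i).prod)
        rw [← hprod, mul_one]
        exact heq.symm
      rwa [h1] at hsupp
    · obtain ⟨hsupp, hprod⟩ := key j i hlt hi.2
      have h1 : ((G.drop j).take (i - j)).prod = 1 := by
        apply mul_left_cancel (a := (G.take j).prod)
        rw [← hprod, mul_one]
        exact heq
      rwa [h1] at hsupp
  -- big pigeonhole
  have hmaps : ∀ k ∈ Finset.range (r * d + 1), (G.take k).prod ∈ hfin.toFinset := by
    intro k hk
    rw [Finset.mem_range] at hk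
    rcases Nat.eq_zero_or_pos k with h0 | h1
    · subst h0; simpa using hone
    · exact hmem k h1 (by omega)
  obtain ⟨y, -, hy⟩ := Finset.exists_lt_card_fiber_of_mul_lt_card_of_maps_to
    (n := r) hmaps (by rw [hcard, Finset.card_range, Nat.mul_comm d r]; omega)
  set F := (Finset.range (r * d + 1)).filter (fun k => (G.take k).prod = y) with hF
  obtain ⟨F', hF'sub, hF'card⟩ := Finset.exists_subset_card_eq (s := F) (n := r + 1) (by omega)
  refine ⟨⇑(F'.orderEmbOfFin hF'card), (F'.orderEmbOfFin hF'card).strictMono, ?_, ?_⟩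
  · have hmem' : F'.orderEmbOfFin hF'card (Fin.last r) ∈ F :=
      hF'sub (F'.orderEmbOfFin_mem hF'card _)
    rw [hF, Finset.mem_filter, Finset.mem_range] at hmem'
    omega
  · intro i
    have hm : F'.orderEmbOfFin hF'card i.castSucc ∈ F :=
      hF'sub (F'.orderEmbOfFin_mem hF'card _)
    have hk : F'.orderEmbOfFin hF'card i.succ ∈ F :=
      hF'sub (F'.orderEmbOfFin_mem hF'card _)
    rw [hF, Finset.mem_filter, Finset.mem_range] at hm hk
    have hlt : F'.orderEmbOfFin hF'card i.castSucc < F'.orderEmbOfFin hF'card i.succ :=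
      (F'.orderEmbOfFin hF'card).strictMono Fin.castSucc_lt_succ
    obtain ⟨-, hprod⟩ := key _ _ hlt (by omega)
    apply mul_left_cancel (a := (G.take (F'.orderEmbOfFin hF'card i.castSucc)).prod)
    rw [← hprod, hm.2, hk.2, mul_one]
end

section
/- Let R be an f-commutative ring that is finitely generated (as a ring). If R is nil, then R is nilpotent; moreover, if β is a generating set of R with n elements and s is the maximal nilpotency index of elements of β, then nd(R) ≤ (s−1)n + 1. -/
section Aux

variable {R : Type*}

lemma mulList_nil [Mul R] (a : R) : mulList a [] = a := rfl

lemma mulList_cons_s12 [Mul R] (a v : R) (L : List R) :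
    mulList a (v :: L) = mulList (a * v) L := rfl

lemma mulList_mul [Semigroup R] (x y : R) (L : List R) :
    x * mulList y L = mulList (x * y) L := by
  induction L generalizing y with
  | nil => rfl
  | cons v L ih => simp only [mulList_cons_s12, ih, mul_assoc]

lemma mulList_append_s12 [Mul R] (a : R) (w w' : List R) :
    mulList a (w ++ w') = mulList (mulList a w) w' :=
  List.foldl_append

section Ring
variable [NonUnitalRing R] {G : Type}

lemma act_zero (act : G → R → R)
    (hmr : ∀ (l : G) (x y : R), act l (x * y) = act l x * y) (l : G) :
    act l 0 = 0 := by
  have h := hmr l 0 0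
  rw [mul_zero] at h
  rw [h, mul_zero]

lemma mulList_act (act : G → R → R)
    (hmr : ∀ (l : G) (x y : R), act l (x * y) = act l x * y) (l : G) (z : R) (L : List R) :
    mulList (act l z) L = act l (mulList z L) := by
  induction L generalizing z with
  | nil => rfl
  | cons v L ih => rw [mulList_cons_s12, ← hmr, ih]; rfl

lemma pw_succ (a : R) (j : ℕ) (hj : 1 ≤ j) : pw a (j + 1) = pw a j * a := by
  cases j with
  | zero => omega
  | succ k => rfl

lemma pw_left (a : R) (j : ℕ) (hj : 1 ≤ j) : a * pw a j = pw a (j + 1) := by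
  induction j with
  | zero => omega
  | succ k ih =>
    cases Nat.eq_zero_or_pos k with
    | inl h => subst h; rfl
    | inr hk =>
      rw [pw_succ a k hk, ← mul_assoc, ih hk, ← pw_succ a (k + 1) (by omega)]

lemma pw_ge (a : R) (s : ℕ) (hsa : pw a s = 0) (j : ℕ) (hj : s ≤ j) (hs : 1 ≤ s) :
    pw a j = 0 := by
  induction j with
  | zero => omega
  | succ k ih =>
    rcases Nat.lt_or_ge s (k + 1) with h | h
    · rw [pw_succ a k (by omega), ih (by omega), zero_mul]
    · have : s = k + 1 := by omega
      rwa [← this]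

lemma lemGA [DecidableEq R] (act : G → R → R)
    (hmr : ∀ (l : G) (x y : R), act l (x * y) = act l x * y)
    (f : R → R → G) (hf : ∀ x y : R, x * y = act (f x y) (y * x))
    (a : R) (s : ℕ) (hs : 1 ≤ s) (hsa : pw a s = 0) :
    ∀ (L : List R) (j : ℕ) (y : R), 1 ≤ j →
      (y = pw a j ∨ ∃ x, y = pw a j * x) → s ≤ j + L.count a → mulList y L = 0 := by
  intro L
  induction L with
  | nil =>
    intro j y hj hy hcnt
    have h0 : pw a j = 0 := pw_ge a s hsa j (by simpa using hcnt) hs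
    rcases hy with rfl | ⟨x, rfl⟩
    · rw [mulList_nil]; exact h0
    · rw [mulList_nil, h0, zero_mul]
  | cons v L ih =>
    intro j y hj hy hcnt
    by_cases hv : a = v
    · subst hv
      have hy' : a * y = pw a (j + 1) ∨ ∃ x, a * y = pw a (j + 1) * x := by
        rcases hy with rfl | ⟨x, rfl⟩
        · exact Or.inl (pw_left a j hj)
        · exact Or.inr ⟨x, by rw [← mul_assoc, pw_left a j hj]⟩
      have hc : s ≤ (j + 1) + L.count a := by
        rw [List.count_cons_self] at hcnt; omega
      have hz : mulList (a * y) L = 0 := ih (j + 1) (a * y) (by omega) hy' hc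
      rw [mulList_cons_s12, hf y a, mulList_act act hmr, hz, act_zero act hmr]
    · rw [mulList_cons_s12]
      apply ih j (y * v) hj
      · rcases hy with rfl | ⟨x, rfl⟩
        · exact Or.inr ⟨v, rfl⟩
        · exact Or.inr ⟨x * v, by rw [mul_assoc]⟩
      · rwa [List.count_cons_of_ne (Ne.symm hv)] at hcnt

lemma lemGB [DecidableEq R] (act : G → R → R)
    (hmr : ∀ (l : G) (x y : R), act l (x * y) = act l x * y)
    (f : R → R → G) (hf : ∀ x y : R, x * y = act (f x y) (y * x))
    (a : R) (s : ℕ) (hs : 1 ≤ s) (hsa : pw a s = 0) :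
    ∀ (L : List R) (y : R), s ≤ L.count a → mulList y L = 0 := by
  intro L
  induction L with
  | nil => intro y h; simp [List.count_nil] at h; omega
  | cons v L ih =>
    intro y hcnt
    by_cases hv : a = v
    · subst hv
      have hz : mulList (a * y) L = 0 := by
        apply lemGA act hmr f hf a s hs hsa L 1 (a * y) le_rfl
          (Or.inr ⟨y, rfl⟩)
        rw [List.count_cons_self] at hcnt; omega
      rw [mulList_cons_s12, hf y a, mulList_act act hmr, hz, act_zero act hmr]
    · rw [mulList_cons_s12]
      apply ih (y * v)
      rwa [List.count_cons_of_ne (Ne.symm hv)] at hcnt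

lemma pigeon [DecidableEq R] (β : Finset R) (s : ℕ) (L : List R)
    (hL : ∀ x ∈ L, x ∈ β) (hlen : (s - 1) * β.card + 1 ≤ L.length) :
    ∃ a ∈ β, s ≤ L.count a := by
  by_contra h
  push_neg at h
  have hsub : (↑L : Multiset R).toFinset ⊆ β := by
    intro a ha
    exact hL a (by simpa using ha)
  have hle : L.length ≤ (s - 1) * β.card := by
    calc L.length = Multiset.card (↑L : Multiset R) := by simp
      _ = ∑ a ∈ (↑L : Multiset R).toFinset, Multiset.count a (↑L : Multiset R) :=
          (Multiset.toFinset_sum_count_eq _).symm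
      _ ≤ ∑ _a ∈ (↑L : Multiset R).toFinset, (s - 1) := by
          apply Finset.sum_le_sum
          intro a ha
          have := h a (hsub ha)
          rw [Multiset.coe_count]
          omega
      _ = (↑L : Multiset R).toFinset.card * (s - 1) := by
          rw [Finset.sum_const, smul_eq_mul]
      _ ≤ β.card * (s - 1) :=
          Nat.mul_le_mul_right _ (Finset.card_le_card hsub)
      _ = (s - 1) * β.card := Nat.mul_comm _ _
  omega

end Ring
end Aux

theorem stmt_12 {R : Type*} [NonUnitalRing R] (hfc : IsFCommutative R)
    (hnil : IsNilRing R)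
    (β : Finset R) (hgen : NonUnitalSubring.closure (β : Set R) = ⊤)
    (s : ℕ) (hs : 1 ≤ s) (hβ : ∀ a ∈ β, pw a s = 0) :
    (∃ n, 1 ≤ n ∧ PowZero R n) ∧ PowZero R ((s - 1) * β.card + 1) := by
  classical
  obtain ⟨G, instG, act, hcomp, hmr, f, hf⟩ := hfc
  set N := (s - 1) * β.card + 1 with hN
  -- words of length at least m
  set W : ℕ → Set R := fun m =>
    {x | ∃ b w, b ∈ β ∧ (∀ y ∈ w, y ∈ β) ∧ m ≤ w.length + 1 ∧ x = mulList b w} with hW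
  -- every word of length at least N is zero
  have keyWord : ∀ x ∈ W N, x = 0 := by
    rintro x ⟨b, w, hb, hw, hlen, rfl⟩
    obtain ⟨a, ha, hcount⟩ := pigeon β s (b :: w)
      (by intro y hy
          rcases List.mem_cons.mp hy with rfl | hy
          · exact hb
          · exact hw y hy)
      (by simp only [List.length_cons]; omega)
    have hsa : pw a s = 0 := hβ a ha
    by_cases hba : b = a
    · subst hba
      apply lemGA act hmr f hf b s hs hsa w 1 b le_rfl (Or.inl rfl)
      rw [List.count_cons_self] at hcount; omega
    · apply lemGB act hmr f hf a s hs hsa w b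
      rwa [List.count_cons_of_ne hba] at hcount
  -- W is antitone
  have hWmono : ∀ m m', m ≤ m' → W m' ⊆ W m := by
    rintro m m' hmm x ⟨b, w, hb, hw, hlen, rfl⟩
    exact ⟨b, w, hb, hw, by omega, rfl⟩
  -- multiplication step
  have keyMul : ∀ (m : ℕ) (x z : R), x ∈ AddSubgroup.closure (W m) →
      z ∈ AddSubgroup.closure (W 1) → x * z ∈ AddSubgroup.closure (W (m + 1)) := by
    intro m x z hx hz
    induction hx using AddSubgroup.closure_induction with
    | mem u hu =>
      induction hz using AddSubgroup.closure_induction with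
      | mem v hv =>
        apply AddSubgroup.subset_closure
        obtain ⟨b, w, hb, hw, hlen, rfl⟩ := hu
        obtain ⟨b', w', hb', hw', hlen', rfl⟩ := hv
        refine ⟨b, w ++ b' :: w', hb, ?_, ?_, ?_⟩
        · intro y hy
          rcases List.mem_append.mp hy with h | h
          · exact hw y h
          · rcases List.mem_cons.mp h with rfl | h
            · exact hb'
            · exact hw' y h
        · simp; omega
        · rw [mulList_mul, mulList_append_s12]
          rfl
      | zero => rw [mul_zero]; exact zero_mem _
      | add a b _ _ ha hb => rw [mul_add]; exact add_mem ha hb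
      | neg a _ ha => rw [mul_neg]; exact neg_mem ha
    | zero => rw [zero_mul]; exact zero_mem _
    | add a b _ _ ha hb => rw [add_mul]; exact add_mem ha hb
    | neg a _ ha => rw [neg_mul]; exact neg_mem ha
  -- everything is in the closure of words
  have keyTop : ∀ x : R, x ∈ AddSubgroup.closure (W 1) := by
    have hmul : ∀ x z : R, x ∈ AddSubgroup.closure (W 1) →
        z ∈ AddSubgroup.closure (W 1) → x * z ∈ AddSubgroup.closure (W 1) := by
      intro x z hx hz
      exact AddSubgroup.closure_mono (hWmono 1 2 (by omega)) (keyMul 1 x z hx hz)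
    let S : NonUnitalSubring R :=
      { carrier := (AddSubgroup.closure (W 1) : Set R)
        zero_mem' := zero_mem _
        add_mem' := fun h1 h2 => add_mem h1 h2
        neg_mem' := fun h => neg_mem h
        mul_mem' := fun h1 h2 => hmul _ _ h1 h2 }
    have hβS : (β : Set R) ⊆ S := by
      intro b hb
      exact AddSubgroup.subset_closure ⟨b, [], hb, by simp, by omega, rfl⟩
    have hle : (⊤ : NonUnitalSubring R) ≤ S := hgen ▸ NonUnitalSubring.closure_le.mpr hβS
    intro x
    exact hle (NonUnitalSubring.mem_top x)
  -- products of k elements lie in closure (W k)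
  have keyProd : ∀ (l : List R) (a : R), mulList a l ∈ AddSubgroup.closure (W (l.length + 1)) := by
    intro l
    induction l using List.reverseRecOn with
    | nil => intro a; exact keyTop a
    | append_singleton l x ih =>
      intro a
      rw [mulList_append_s12]
      have := keyMul (l.length + 1) (mulList a l) x (ih a) (keyTop x)
      simpa [mulList] using this
  have main : PowZero R N := by
    intro a l hl
    have h1 : mulList a l ∈ AddSubgroup.closure (W N) := hl ▸ keyProd l a
    have h2 : AddSubgroup.closure (W N) ≤ ⊥ := by
      rw [AddSubgroup.closure_le]
      intro x hx
      simpa using keyWord x hx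
    simpa using h2 h1
  exact ⟨⟨N, by omega, main⟩, main⟩
end
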